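/- arXiv:2601.14147 — 2 statements merged into one kernel-verified Lean document; each statement's English description precedes it below -/
import Mathlib

section
/- Let M and M' be real symmetric m×m matrices with M = M' + εB + R where B is symmetric, ‖R‖_op ≤ Cε² and |ε| small. If λ := λ_min(M') has eigenspace with orthonormal basis forming the columns of V, then λ_min(M) ≥ λ + ε·λ_min(VᵀBV) − Cε² − |ε|·‖B‖_op·δ(ε) for an error term δ(ε) → 0; in particular, if λ_min(VᵀBV) > 0 then λ_min(M) > λ_min(M') for all sufficiently small ε > 0. -/
open Matrix

noncomputable def lamMin {m : ℕ} (A : Matrix (Fin m) (Fin m) ℝ) : ℝ :=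
  ⨅ v : {v : EuclideanSpace ℝ (Fin m) // ‖v‖ = 1}, (v : Fin m → ℝ) ⬝ᵥ A *ᵥ (v : Fin m → ℝ)

noncomputable def lamMax {m : ℕ} (A : Matrix (Fin m) (Fin m) ℝ) : ℝ :=
  ⨆ v : {v : EuclideanSpace ℝ (Fin m) // ‖v‖ = 1}, (v : Fin m → ℝ) ⬝ᵥ A *ᵥ (v : Fin m → ℝ)

noncomputable def opNorm {m : ℕ} (A : Matrix (Fin m) (Fin m) ℝ) : ℝ :=
  ⨆ v : {v : EuclideanSpace ℝ (Fin m) // ‖v‖ = 1},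
    ‖(show EuclideanSpace ℝ (Fin m) from WithLp.toLp 2 (A *ᵥ (v : Fin m → ℝ)))‖

namespace Stmt14Aux

variable {n : ℕ}

/-- mulVec as a map on Euclidean space (definitionally `A *ᵥ ·`). -/
noncomputable def mvE (A : Matrix (Fin n) (Fin n) ℝ) (y : EuclideanSpace ℝ (Fin n)) :
    EuclideanSpace ℝ (Fin n) := WithLp.toLp 2 (A *ᵥ (y : Fin n → ℝ))

lemma opNorm_eq (A : Matrix (Fin n) (Fin n) ℝ) :
    opNorm A = ⨆ v : {v : EuclideanSpace ℝ (Fin n) // ‖v‖ = 1}, ‖mvE A v‖ := rfl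

lemma mvE_eq_clm (A : Matrix (Fin n) (Fin n) ℝ) (y : EuclideanSpace ℝ (Fin n)) :
    mvE A y = Matrix.toEuclideanCLM (𝕜 := ℝ) A y := rfl

lemma dot_eq_inner (x y : EuclideanSpace ℝ (Fin n)) :
    (x : Fin n → ℝ) ⬝ᵥ (y : Fin n → ℝ) = inner ℝ x y := by
  simp [dotProduct, PiLp.inner_apply, RCLike.inner_apply, mul_comm]

lemma bddAbove_opnorm (A : Matrix (Fin n) (Fin n) ℝ) :
    BddAbove (Set.range fun v : {v : EuclideanSpace ℝ (Fin n) // ‖v‖ = 1} => ‖mvE A v‖) := by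
  refine ⟨‖Matrix.toEuclideanCLM (𝕜 := ℝ) A‖, ?_⟩
  rintro x ⟨v, rfl⟩
  show ‖mvE A v‖ ≤ _
  rw [mvE_eq_clm]
  calc ‖Matrix.toEuclideanCLM (𝕜 := ℝ) A (v : EuclideanSpace ℝ (Fin n))‖
      ≤ ‖Matrix.toEuclideanCLM (𝕜 := ℝ) A‖ * ‖(v : EuclideanSpace ℝ (Fin n))‖ :=
        (Matrix.toEuclideanCLM (𝕜 := ℝ) A).le_opNorm _
    _ = ‖Matrix.toEuclideanCLM (𝕜 := ℝ) A‖ := by rw [v.2, mul_one]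

lemma norm_mvE_le (A : Matrix (Fin n) (Fin n) ℝ) (y : EuclideanSpace ℝ (Fin n)) :
    ‖mvE A y‖ ≤ opNorm A * ‖y‖ := by
  rcases eq_or_ne y 0 with rfl | hy
  · have : mvE A 0 = 0 := by
      simp [mvE]
    rw [this]; simp
  · set u : EuclideanSpace ℝ (Fin n) := ‖y‖⁻¹ • y with hu
    have hny : (0:ℝ) < ‖y‖ := norm_pos_iff.2 hy
    have hun : ‖u‖ = 1 := by
      rw [hu, norm_smul, norm_inv, norm_norm, inv_mul_cancel₀ hny.ne']
    have key : ‖mvE A u‖ ≤ opNorm A := by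
      rw [opNorm_eq]
      exact le_ciSup (bddAbove_opnorm A) (⟨u, hun⟩ : {v : EuclideanSpace ℝ (Fin n) // ‖v‖ = 1})
    have hAy : mvE A y = ‖y‖ • mvE A u := by
      simp only [mvE, hu, WithLp.ofLp_smul, Matrix.mulVec_smul, WithLp.toLp_smul, smul_smul,
        mul_inv_cancel₀ hny.ne', one_smul]
    rw [hAy, norm_smul, norm_norm, mul_comm]
    exact mul_le_mul_of_nonneg_right key hny.le

lemma abs_dot_mulVec_le (A : Matrix (Fin n) (Fin n) ℝ) (x y : EuclideanSpace ℝ (Fin n)) :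
    |(x : Fin n → ℝ) ⬝ᵥ A *ᵥ (y : Fin n → ℝ)| ≤ opNorm A * ‖x‖ * ‖y‖ := by
  have h1 : (x : Fin n → ℝ) ⬝ᵥ A *ᵥ (y : Fin n → ℝ) = inner ℝ x (mvE A y) := dot_eq_inner x (mvE A y)
  rw [h1]
  calc |inner ℝ x (mvE A y)|
      ≤ ‖x‖ * ‖mvE A y‖ := abs_real_inner_le_norm _ _
    _ ≤ ‖x‖ * (opNorm A * ‖y‖) :=
        mul_le_mul_of_nonneg_left (norm_mvE_le A y) (norm_nonneg _)
    _ = opNorm A * ‖x‖ * ‖y‖ := by ring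

lemma bddBelow_rayleigh (A : Matrix (Fin n) (Fin n) ℝ) :
    BddBelow (Set.range fun v : {v : EuclideanSpace ℝ (Fin n) // ‖v‖ = 1} =>
      (v : Fin n → ℝ) ⬝ᵥ A *ᵥ (v : Fin n → ℝ)) := by
  refine ⟨-(opNorm A), ?_⟩
  rintro x ⟨v, rfl⟩
  have h := abs_dot_mulVec_le A v v
  rw [v.2] at h
  simp only [mul_one] at h
  exact (abs_le.1 h).1

lemma symm_dot (A : Matrix (Fin n) (Fin n) ℝ) (hA : A.IsSymm) (x y : Fin n → ℝ) :
    x ⬝ᵥ A *ᵥ y = (A *ᵥ x) ⬝ᵥ y := by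
  rw [Matrix.dotProduct_mulVec, ← Matrix.mulVec_transpose, hA.eq]

lemma lamMin_le (A : Matrix (Fin n) (Fin n) ℝ) (v : {v : EuclideanSpace ℝ (Fin n) // ‖v‖ = 1}) :
    lamMin A ≤ (v : Fin n → ℝ) ⬝ᵥ A *ᵥ (v : Fin n → ℝ) :=
  ciInf_le (bddBelow_rayleigh A) v

lemma le_lamMin (A : Matrix (Fin n) (Fin n) ℝ)
    [Nonempty {v : EuclideanSpace ℝ (Fin n) // ‖v‖ = 1}] (b : ℝ)
    (h : ∀ v : {v : EuclideanSpace ℝ (Fin n) // ‖v‖ = 1},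
      b ≤ (v : Fin n → ℝ) ⬝ᵥ A *ᵥ (v : Fin n → ℝ)) :
    b ≤ lamMin A :=
  le_ciInf h

lemma lamMin_smul_le (A : Matrix (Fin n) (Fin n) ℝ) (w : EuclideanSpace ℝ (Fin n)) :
    lamMin A * ‖w‖ ^ 2 ≤ (w : Fin n → ℝ) ⬝ᵥ A *ᵥ (w : Fin n → ℝ) := by
  rcases eq_or_ne w 0 with rfl | hw
  · have h0 : ((0 : EuclideanSpace ℝ (Fin n)) : Fin n → ℝ) = (0 : Fin n → ℝ) := rfl
    rw [h0]
    simp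
  · have hnw : (0:ℝ) < ‖w‖ := norm_pos_iff.2 hw
    set u : EuclideanSpace ℝ (Fin n) := ‖w‖⁻¹ • w with hu
    have hun : ‖u‖ = 1 := by
      rw [hu, norm_smul, norm_inv, norm_norm, inv_mul_cancel₀ hnw.ne']
    have h1 : lamMin A ≤ (u : Fin n → ℝ) ⬝ᵥ A *ᵥ (u : Fin n → ℝ) := lamMin_le A ⟨u, hun⟩
    have h2 : (u : Fin n → ℝ) ⬝ᵥ A *ᵥ (u : Fin n → ℝ)
        = ‖w‖⁻¹ ^ 2 * ((w : Fin n → ℝ) ⬝ᵥ A *ᵥ (w : Fin n → ℝ)) := by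
      have hu' : (u : Fin n → ℝ) = ‖w‖⁻¹ • (w : Fin n → ℝ) := rfl
      rw [hu', Matrix.mulVec_smul, smul_dotProduct, dotProduct_smul,
        smul_eq_mul, smul_eq_mul, sq]
      ring
    rw [h2] at h1
    calc lamMin A * ‖w‖ ^ 2
        ≤ (‖w‖⁻¹ ^ 2 * ((w : Fin n → ℝ) ⬝ᵥ A *ᵥ (w : Fin n → ℝ))) * ‖w‖ ^ 2 :=
          mul_le_mul_of_nonneg_right h1 (sq_nonneg _)
      _ = (w : Fin n → ℝ) ⬝ᵥ A *ᵥ (w : Fin n → ℝ) := by field_simp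

end Stmt14Aux

open Stmt14Aux

/-- a perturbation expansion of λ_min.  If M(ε) = M' + εB + R(ε) with
‖R(ε)‖_op ≤ Cε², and V is an orthonormal basis of the eigenspace of λ = λ_min(M'),
then λ_min(M(ε)) ≥ λ + ε·λ_min(VᵀBV) − Cε² − ε·‖B‖_op·δ(ε) for some error δ(ε) → 0 as
ε → 0⁺; in particular, if λ_min(VᵀBV) > 0 then λ_min(M(ε)) > λ_min(M') for all
sufficiently small ε > 0. -/
theorem stmt14 {m s : ℕ} (hs : 0 < s) (M' B : Matrix (Fin m) (Fin m) ℝ)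
    (R M : ℝ → Matrix (Fin m) (Fin m) ℝ) (C : ℝ)
    (hM' : M'.IsSymm) (hB : B.IsSymm) (hR : ∀ ε, (R ε).IsSymm)
    (hRC : ∀ ε : ℝ, opNorm (R ε) ≤ C * ε ^ 2)
    (hM : ∀ ε : ℝ, M ε = M' + ε • B + R ε)
    (V : Matrix (Fin m) (Fin s) ℝ) (hVorth : Vᵀ * V = 1)
    (hVspan : ∀ v : Fin m → ℝ, (M' *ᵥ v = lamMin M' • v) ↔ ∃ w : Fin s → ℝ, v = V *ᵥ w) :
    (∃ δ : ℝ → ℝ, Filter.Tendsto δ (nhdsWithin 0 (Set.Ioi 0)) (nhds 0) ∧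
      ∀ ε : ℝ, 0 < ε →
        lamMin M' + ε * lamMin (Vᵀ * B * V) - C * ε ^ 2 - ε * opNorm B * δ ε
          ≤ lamMin (M ε)) ∧
    (0 < lamMin (Vᵀ * B * V) →
      ∃ ε₀ > (0:ℝ), ∀ ε ∈ Set.Ioo (0:ℝ) ε₀, lamMin M' < lamMin (M ε)) := by
  classical
  have hm : 0 < m := by
    by_contra h
    push_neg at h
    interval_cases m
    have := congrFun (congrFun hVorth ⟨0, hs⟩) ⟨0, hs⟩
    simp [Matrix.mul_apply, Matrix.one_apply] at this
  have hH' : M'.IsHermitian := by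
    rw [Matrix.IsHermitian, conjTranspose_eq_transpose_of_trivial]; exact hM'
  set lam := lamMin M' with hlam
  set μ := hH'.eigenvalues with hμ
  set b := hH'.eigenvectorBasis with hb
  have hbnorm : ∀ i, ‖b i‖ = 1 := fun i => hH'.eigenvectorBasis.orthonormal.1 i
  have hbe : ∀ i, M' *ᵥ ((b i : EuclideanSpace ℝ (Fin m)) : Fin m → ℝ) = μ i • (b i : Fin m → ℝ) :=
    fun i => hH'.mulVec_eigenvectorBasis i
  have hμlam : ∀ i, lam ≤ μ i := by
    intro i
    have h1 := lamMin_le M' ⟨b i, hbnorm i⟩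
    have h2 : ((b i : EuclideanSpace ℝ (Fin m)) : Fin m → ℝ) ⬝ᵥ M' *ᵥ (b i : Fin m → ℝ) = μ i := by
      rw [hbe i, dotProduct_smul, smul_eq_mul, dot_eq_inner,
        real_inner_self_eq_norm_sq, hbnorm i]
      ring
    rw [← h2]
    exact h1
  -- nonempty spheres
  have hne_m : Nonempty {v : EuclideanSpace ℝ (Fin m) // ‖v‖ = 1} :=
    ⟨⟨EuclideanSpace.single ⟨0, hm⟩ (1:ℝ), by simp⟩⟩
  have hne_s : Nonempty {v : EuclideanSpace ℝ (Fin s) // ‖v‖ = 1} :=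
    ⟨⟨EuclideanSpace.single ⟨0, hs⟩ (1:ℝ), by simp⟩⟩
  set nb := opNorm B with hnb
  have hnb0 : 0 ≤ nb := by
    obtain ⟨u⟩ := hne_m
    have h1 : ‖mvE B u‖ ≤ nb := by
      rw [hnb, opNorm_eq]; exact le_ciSup (bddAbove_opnorm B) u
    exact le_trans (norm_nonneg _) h1
  set lam1 := lamMin (Vᵀ * B * V) with hlam1
  -- (V *ᵥ w) ⬝ᵥ A *ᵥ (V *ᵥ w) = w ⬝ᵥ (Vᵀ * A * V) *ᵥ w
  have hVAV : ∀ (A : Matrix (Fin m) (Fin m) ℝ) (w : Fin s → ℝ),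
      (V *ᵥ w) ⬝ᵥ A *ᵥ (V *ᵥ w) = w ⬝ᵥ (Vᵀ * A * V) *ᵥ w := by
    intro A w
    calc (V *ᵥ w) ⬝ᵥ A *ᵥ (V *ᵥ w)
        = ((V *ᵥ w) ᵥ* A) ⬝ᵥ (V *ᵥ w) := Matrix.dotProduct_mulVec _ _ _
      _ = (((V *ᵥ w) ᵥ* A) ᵥ* V) ⬝ᵥ w := Matrix.dotProduct_mulVec _ _ _
      _ = ((V *ᵥ w) ᵥ* (A * V)) ⬝ᵥ w := by rw [Matrix.vecMul_vecMul]
      _ = ((w ᵥ* Vᵀ) ᵥ* (A * V)) ⬝ᵥ w := by rw [Matrix.vecMul_transpose]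
      _ = (w ᵥ* (Vᵀ * (A * V))) ⬝ᵥ w := by rw [Matrix.vecMul_vecMul]
      _ = w ⬝ᵥ (Vᵀ * (A * V)) *ᵥ w := (Matrix.dotProduct_mulVec _ _ _).symm
      _ = w ⬝ᵥ (Vᵀ * A * V) *ᵥ w := by rw [← Matrix.mul_assoc]
  -- ‖V *ᵥ w‖² = w ⬝ᵥ w
  have hVw : ∀ w : Fin s → ℝ, (V *ᵥ w) ⬝ᵥ (V *ᵥ w) = w ⬝ᵥ w := by
    intro w
    calc (V *ᵥ w) ⬝ᵥ (V *ᵥ w)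
        = ((V *ᵥ w) ᵥ* V) ⬝ᵥ w := Matrix.dotProduct_mulVec _ _ _
      _ = ((w ᵥ* Vᵀ) ᵥ* V) ⬝ᵥ w := by rw [Matrix.vecMul_transpose]
      _ = (w ᵥ* (Vᵀ * V)) ⬝ᵥ w := by rw [Matrix.vecMul_vecMul]
      _ = (w ᵥ* 1) ⬝ᵥ w := by rw [hVorth]
      _ = w ⬝ᵥ w := by rw [Matrix.vecMul_one]
  have hnormVw : ∀ w : Fin s → ℝ,
      ‖(show EuclideanSpace ℝ (Fin m) from WithLp.toLp 2 (V *ᵥ w))‖ ^ 2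
        = ‖(show EuclideanSpace ℝ (Fin s) from WithLp.toLp 2 w)‖ ^ 2 := by
    intro w
    rw [← real_inner_self_eq_norm_sq, ← real_inner_self_eq_norm_sq,
      ← dot_eq_inner, ← dot_eq_inner]
    exact hVw w
  have hray1 : ∀ u : {u : EuclideanSpace ℝ (Fin s) // ‖u‖ = 1},
      |(u : Fin s → ℝ) ⬝ᵥ (Vᵀ * B * V) *ᵥ (u : Fin s → ℝ)| ≤ nb := by
    intro u
    rw [← hVAV B u]
    have h2 := abs_dot_mulVec_le B (show EuclideanSpace ℝ (Fin m) from WithLp.toLp 2 (V *ᵥ (u : Fin s → ℝ)))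
      (show EuclideanSpace ℝ (Fin m) from WithLp.toLp 2 (V *ᵥ (u : Fin s → ℝ)))
    have h3 : ‖(show EuclideanSpace ℝ (Fin m) from WithLp.toLp 2 (V *ᵥ (u : Fin s → ℝ)))‖ ^ 2 = 1 := by
      rw [hnormVw]
      have : ‖(show EuclideanSpace ℝ (Fin s) from WithLp.toLp 2 (u : Fin s → ℝ))‖ = 1 := u.2
      rw [this]; norm_num
    have h4 : ‖(show EuclideanSpace ℝ (Fin m) from WithLp.toLp 2 (V *ᵥ (u : Fin s → ℝ)))‖ = 1 := by
      have h5 : (‖(show EuclideanSpace ℝ (Fin m) from WithLp.toLp 2 (V *ᵥ (u : Fin s → ℝ)))‖ - 1)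
          * (‖(show EuclideanSpace ℝ (Fin m) from WithLp.toLp 2 (V *ᵥ (u : Fin s → ℝ)))‖ + 1) = 0 := by
        nlinarith [h3]
      rcases mul_eq_zero.1 h5 with h6 | h6
      · linarith
      · have := norm_nonneg (show EuclideanSpace ℝ (Fin m) from WithLp.toLp 2 (V *ᵥ (u : Fin s → ℝ)))
        linarith
    rw [h4] at h2
    simpa using h2
  clear_value μ b
  have hlam1_abs : |lam1| ≤ nb := by
    rw [abs_le]
    constructor
    · refine le_lamMin _ _ (fun u => ?_)
      linarith [(abs_le.1 (hray1 u)).1]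
    · obtain ⟨u⟩ := hne_s
      have h1 := lamMin_le (Vᵀ * B * V) u
      linarith [(abs_le.1 (hray1 u)).2]
  clear_value lam nb lam1
  -- spectral gap
  set T : Finset (Fin m) := Finset.univ.filter (fun i => μ i ≠ lam) with hT
  set g : ℝ := if h : T.Nonempty then T.inf' h μ - lam else 1 with hgdef
  have hg : 0 < g := by
    rw [hgdef]
    split_ifs with h
    · obtain ⟨i, hi, hie⟩ := Finset.exists_mem_eq_inf' h μ
      rw [hie]
      have : μ i ≠ lam := (Finset.mem_filter.1 hi).2
      have := hμlam i
      cases lt_or_eq_of_le (hμlam i) with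
      | inl h' => linarith
      | inr h' => exact absurd h'.symm ‹μ i ≠ lam›
    · norm_num
  have hgap : ∀ i, μ i ≠ lam → lam + g ≤ μ i := by
    intro i hi
    have hiT : i ∈ T := Finset.mem_filter.2 ⟨Finset.mem_univ i, hi⟩
    have hne : T.Nonempty := ⟨i, hiT⟩
    rw [hgdef, dif_pos hne]
    have := Finset.inf'_le μ hiT
    linarith
  clear_value g T
  -- the key bound
  have key : ∀ ε : ℝ, 0 < ε →
      lam + ε * lam1 - C * ε ^ 2 - ε * nb * (4 * nb * ε / g) ≤ lamMin (M ε) := by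
    intro ε hε
    refine le_lamMin _ _ (fun v => ?_)
    set c : Fin m → ℝ := fun i => (inner ℝ (b i) (v : EuclideanSpace ℝ (Fin m)) : ℝ) with hc
    have hc1 : ∑ i, c i * c i = 1 := by
      have h1 := b.sum_inner_mul_inner (v : EuclideanSpace ℝ (Fin m))
        (v : EuclideanSpace ℝ (Fin m))
      have h2 : (inner ℝ (v : EuclideanSpace ℝ (Fin m)) (v : EuclideanSpace ℝ (Fin m)) : ℝ) = 1 := by
        rw [real_inner_self_eq_norm_sq, v.2]; norm_num
      rw [h2] at h1
      rw [← h1]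
      refine Finset.sum_congr rfl (fun i _ => ?_)
      simp only [hc]
      rw [real_inner_comm (v : EuclideanSpace ℝ (Fin m)) (b i)]
    have hray : (v : Fin m → ℝ) ⬝ᵥ M' *ᵥ (v : Fin m → ℝ) = ∑ i, μ i * (c i * c i) := by
      have h1 : (v : Fin m → ℝ) ⬝ᵥ M' *ᵥ (v : Fin m → ℝ)
          = (inner ℝ (v : EuclideanSpace ℝ (Fin m))
              (mvE M' (v : EuclideanSpace ℝ (Fin m))) : ℝ) := dot_eq_inner _ (mvE M' (v : EuclideanSpace ℝ (Fin m)))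
      have h2 := b.sum_inner_mul_inner (v : EuclideanSpace ℝ (Fin m))
        (mvE M' (v : EuclideanSpace ℝ (Fin m)))
      have h3 : ∀ i, (inner ℝ (b i) (mvE M' (v : EuclideanSpace ℝ (Fin m))) : ℝ) = μ i * c i := by
        intro i
        have e1 : (inner ℝ (b i) (mvE M' (v : EuclideanSpace ℝ (Fin m))) : ℝ)
            = ((b i : EuclideanSpace ℝ (Fin m)) : Fin m → ℝ) ⬝ᵥ M' *ᵥ (v : Fin m → ℝ) :=
          (dot_eq_inner _ _).symm
        rw [e1, symm_dot M' hM', hbe i, smul_dotProduct, smul_eq_mul, dot_eq_inner]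
      rw [h1, ← h2]
      refine Finset.sum_congr rfl (fun i _ => ?_)
      rw [h3 i]
      have hcm : (inner ℝ (v : EuclideanSpace ℝ (Fin m)) (b i) : ℝ) = c i :=
        real_inner_comm _ _
      rw [hcm]
      ring
    -- the projection onto the eigenspace
    set S : Finset (Fin m) := Finset.univ.filter (fun i => μ i = lam) with hS
    set p : EuclideanSpace ℝ (Fin m) := ∑ i ∈ S, c i • b i with hp
    set a : ℝ := ∑ i ∈ S, c i * c i with ha
    have hpa : ‖p‖ ^ 2 = a := by
      rw [← real_inner_self_eq_norm_sq, hp, ha]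
      have h1 := b.orthonormal.inner_sum c c S
      rw [h1]
      simp
    have hpv : (inner ℝ p (v : EuclideanSpace ℝ (Fin m)) : ℝ) = a := by
      rw [hp, ha, sum_inner]
      refine Finset.sum_congr rfl (fun i hi => ?_)
      rw [real_inner_smul_left]
    have ha0 : 0 ≤ a := Finset.sum_nonneg (fun i _ => mul_self_nonneg _)
    have ha1 : a ≤ 1 := by
      rw [← hc1, ha]
      exact Finset.sum_le_sum_of_subset_of_nonneg (Finset.subset_univ S)
        (fun i _ _ => mul_self_nonneg _)
    set q : EuclideanSpace ℝ (Fin m) := (v : EuclideanSpace ℝ (Fin m)) - p with hqdef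
    have hq2 : ‖q‖ ^ 2 = 1 - a := by
      rw [hqdef, norm_sub_sq_real, real_inner_comm, hpv, hpa, v.2]
      ring
    set t : ℝ := ‖q‖ with htdef
    have ht0 : 0 ≤ t := norm_nonneg _
    have ht2 : t ^ 2 = 1 - a := hq2
    have ht1 : t ≤ 1 := by nlinarith only [ht2, ht0, ha0, sq_nonneg (t - 1), sq_nonneg (t + 1)]
    have hp1 : ‖p‖ ≤ 1 := by nlinarith only [norm_nonneg p, hpa, ha1, sq_nonneg (‖p‖ - 1), sq_nonneg (‖p‖ + 1)]
    -- p is an eigenvector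
    have hpcoe : (p : Fin m → ℝ)
        = ∑ i ∈ S, c i • ((b i : EuclideanSpace ℝ (Fin m)) : Fin m → ℝ) := by
        rw [hp, WithLp.ofLp_sum]; rfl
    have hMp : M' *ᵥ (p : Fin m → ℝ) = lam • (p : Fin m → ℝ) := by
      rw [hpcoe]
      have h1 : M' *ᵥ (∑ i ∈ S, c i • ((b i : EuclideanSpace ℝ (Fin m)) : Fin m → ℝ))
          = ∑ i ∈ S, c i • (M' *ᵥ ((b i : EuclideanSpace ℝ (Fin m)) : Fin m → ℝ)) := by
        rw [← Matrix.mulVecLin_apply, map_sum]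
        simp [Matrix.mulVecLin_apply]
      rw [h1, Finset.smul_sum]
      refine Finset.sum_congr rfl (fun i hi => ?_)
      have hiS : μ i = lam := by
        rw [hS] at hi
        exact (Finset.mem_filter.1 hi).2
      rw [hbe i, hiS, smul_comm]
    obtain ⟨w, hw⟩ := (hVspan (p : Fin m → ℝ)).1 hMp
    have hwa : w ⬝ᵥ w = a := by
      rw [← hVw w, ← hw, dot_eq_inner p p, real_inner_self_eq_norm_sq, hpa]
    have hwnorm : ‖(show EuclideanSpace ℝ (Fin s) from WithLp.toLp 2 w)‖ ^ 2 = a := by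
      rw [← real_inner_self_eq_norm_sq, ← dot_eq_inner]
      exact hwa
    have hpBp : lam1 * a ≤ (p : Fin m → ℝ) ⬝ᵥ B *ᵥ (p : Fin m → ℝ) := by
      rw [hw, hVAV B w]
      have := lamMin_smul_le (Vᵀ * B * V) (show EuclideanSpace ℝ (Fin s) from WithLp.toLp 2 w)
      rw [hwnorm] at this
      rw [hlam1]
      exact this
    have hpq := abs_dot_mulVec_le B p q
    have hqp := abs_dot_mulVec_le B q p
    have hqq := abs_dot_mulVec_le B q q
    rw [← hnb] at hpq hqp hqq
    have e1' : -(nb * ‖p‖ * t) ≤ (p : Fin m → ℝ) ⬝ᵥ B *ᵥ (q : Fin m → ℝ) := by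
      rw [htdef]; exact (abs_le.1 hpq).1
    have e2' : -(nb * t * ‖p‖) ≤ (q : Fin m → ℝ) ⬝ᵥ B *ᵥ (p : Fin m → ℝ) := by
      rw [htdef]; exact (abs_le.1 hqp).1
    have e3' : -(nb * t * t) ≤ (q : Fin m → ℝ) ⬝ᵥ B *ᵥ (q : Fin m → ℝ) := by
      rw [htdef]; exact (abs_le.1 hqq).1
    clear_value t a q p c S
    -- decompose v = p + q
    have hvpq : (v : Fin m → ℝ) = (p : Fin m → ℝ) + (q : Fin m → ℝ) := by
      rw [hqdef, WithLp.ofLp_sub]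
      abel
    have hBv : lam1 - 4 * nb * t ≤ (v : Fin m → ℝ) ⬝ᵥ B *ᵥ (v : Fin m → ℝ) := by
      rw [hvpq, add_dotProduct, Matrix.mulVec_add, dotProduct_add,
        dotProduct_add]
      have hlu := abs_le.1 hlam1_abs
      have ha' : a = 1 - t ^ 2 := by linarith only [ht2]
      have k1 : nb * ‖p‖ * t ≤ nb * t := by nlinarith only [mul_nonneg (mul_nonneg hnb0 ht0) (sub_nonneg.2 hp1)]
      have k2 : nb * t * ‖p‖ ≤ nb * t := by nlinarith only [mul_nonneg (mul_nonneg hnb0 ht0) (sub_nonneg.2 hp1)]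
      have k3 : nb * t * t ≤ nb * t := by nlinarith only [mul_nonneg (mul_nonneg hnb0 ht0) (sub_nonneg.2 ht1)]
      have k4 : lam1 - nb * t * t ≤ lam1 * a := by
        rw [ha']
        nlinarith only [mul_le_mul_of_nonneg_right hlu.2 (sq_nonneg t)]
      linarith only [hpBp, e1', e2', e3', k1, k2, k3, k4]
    have hM'lb : lam + g * t ^ 2 ≤ (v : Fin m → ℝ) ⬝ᵥ M' *ᵥ (v : Fin m → ℝ) := by
      rw [hray]
      have hsplit := Finset.sum_filter_add_sum_filter_not Finset.univ
        (fun i => μ i = lam) (fun i => μ i * (c i * c i))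
      have hcsplit := Finset.sum_filter_add_sum_filter_not Finset.univ
        (fun i => μ i = lam) (fun i => c i * c i)
      rw [hc1] at hcsplit
      have hSsum : ∑ i ∈ Finset.univ.filter (fun i => μ i = lam), μ i * (c i * c i)
          = lam * a := by
        rw [ha, hS, Finset.mul_sum]
        refine Finset.sum_congr rfl (fun i hi => ?_)
        rw [(Finset.mem_filter.1 hi).2]
      have hTsum : (lam + g) * (1 - a)
          ≤ ∑ i ∈ Finset.univ.filter (fun i => ¬ μ i = lam), μ i * (c i * c i) := by
        have h1 : ∑ i ∈ Finset.univ.filter (fun i => ¬ μ i = lam), c i * c i = 1 - a := by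
          have : a = ∑ i ∈ Finset.univ.filter (fun i => μ i = lam), c i * c i := by
            rw [ha, hS]
          linarith
        rw [← h1, Finset.mul_sum]
        refine Finset.sum_le_sum (fun i hi => ?_)
        have h2 := hgap i (Finset.mem_filter.1 hi).2
        exact mul_le_mul_of_nonneg_right h2 (mul_self_nonneg (c i))
      rw [← hsplit, hSsum]
      have h4 : (lam + g) * (1 - a) = lam - lam * a + g * t ^ 2 := by
        rw [ht2]; ring
      linarith only [hTsum, h4]
    have hRlb : -(C * ε ^ 2) ≤ (v : Fin m → ℝ) ⬝ᵥ (R ε) *ᵥ (v : Fin m → ℝ) := by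
      have h1 := abs_dot_mulVec_le (R ε) (v : EuclideanSpace ℝ (Fin m))
        (v : EuclideanSpace ℝ (Fin m))
      rw [v.2] at h1
      simp only [mul_one] at h1
      have h2 := (abs_le.1 h1).1
      have h3 := hRC ε
      have h4 : -(C * ε ^ 2) ≤ -(opNorm (R ε)) := neg_le_neg h3
      exact le_trans h4 h2
    -- assemble
    have hsplitM : (v : Fin m → ℝ) ⬝ᵥ (M ε) *ᵥ (v : Fin m → ℝ)
        = (v : Fin m → ℝ) ⬝ᵥ M' *ᵥ (v : Fin m → ℝ)
          + ε * ((v : Fin m → ℝ) ⬝ᵥ B *ᵥ (v : Fin m → ℝ))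
          + (v : Fin m → ℝ) ⬝ᵥ (R ε) *ᵥ (v : Fin m → ℝ) := by
      rw [hM ε, Matrix.add_mulVec, Matrix.add_mulVec, dotProduct_add,
        dotProduct_add, Matrix.smul_mulVec, dotProduct_smul,
        smul_eq_mul]
    rw [hsplitM]
    have hBe : ε * (lam1 - 4 * nb * t) ≤ ε * ((v : Fin m → ℝ) ⬝ᵥ B *ᵥ (v : Fin m → ℝ)) :=
      mul_le_mul_of_nonneg_left hBv hε.le
    have hfinal : -(ε * nb * (4 * nb * ε / g)) ≤ g * t ^ 2 - 4 * ε * nb * t := by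
      have h9 : -(ε * nb * (4 * nb * ε / g)) = (-(4 * ε ^ 2 * nb ^ 2)) / g := by
        rw [neg_div]
        ring
      rw [h9, div_le_iff₀ hg]
      nlinarith only [sq_nonneg (g * t - 2 * ε * nb)]
    linarith only [hM'lb, hBe, hRlb, hfinal]
  refine ⟨⟨fun ε => 4 * nb * ε / g, ?_, ?_⟩, ?_⟩
  · have hcont : Filter.Tendsto (fun ε : ℝ => 4 * nb * ε / g) (nhds 0)
        (nhds (4 * nb * 0 / g)) :=
      ((continuous_const.mul continuous_id).div_const g).tendsto 0
    rw [show (4 * nb * 0 / g : ℝ) = 0 by simp] at hcont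
    exact hcont.mono_left nhdsWithin_le_nhds
  · intro ε hε
    exact key ε hε
  · intro hpos
    have hC0 : 0 ≤ C := by
      have h1 := hRC 1
      have h2 : 0 ≤ opNorm (R 1) := by
        obtain ⟨u⟩ := hne_m
        have h3 : ‖mvE (R 1) u‖ ≤ opNorm (R 1) := by
          rw [opNorm_eq]; exact le_ciSup (bddAbove_opnorm (R 1)) u
        exact le_trans (norm_nonneg _) h3
      nlinarith only [h1, h2]
    set k : ℝ := 4 * nb * nb / g with hk
    have hk0 : 0 ≤ k := by
      rw [hk]
      exact div_nonneg (by nlinarith only [hnb0]) hg.le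
    have hD : (0:ℝ) < 1 + C + k := by linarith only [hC0, hk0]
    refine ⟨lam1 / (1 + C + k), div_pos hpos hD, ?_⟩
    intro ε hε
    obtain ⟨hε0, hεlt⟩ := hε
    have hb1 := key ε hε0
    have heq : ε * nb * (4 * nb * ε / g) = k * ε ^ 2 := by rw [hk]; ring
    rw [heq] at hb1
    have hεD : ε * (1 + C + k) < lam1 := (lt_div_iff₀ hD).1 hεlt
    have hstep : lam < lam + ε * lam1 - C * ε ^ 2 - k * ε ^ 2 := by
      nlinarith only [hε0, hεD, hC0, hk0, sq_nonneg ε]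
    linarith only [hstep, hb1]
end

section
/- Let f : ℝ^d → ℝ^m be bounded and Lipschitz on a compact set Ω ⊂ ℝ^d: ‖f(x)‖ ≤ K and ‖f(x) − f(y)‖ ≤ L‖x − y‖ for x, y ∈ Ω. Then for any two probability measures ρ₁, ρ₂ supported on Ω, the information matrices satisfy ‖M_{ρ₁} − M_{ρ₂}‖_op ≤ 2KL·W₁(ρ₁, ρ₂) ≤ 2KL·W₂(ρ₁, ρ₂), where W_p denotes the p-Wasserstein distance. Consequently the E-criterion F_E(ρ) = λ_min(M_ρ) is Lipschitz with respect to W₂ with constant 2KL. -/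
open Matrix MeasureTheory

noncomputable def infoMatrix {d m : ℕ} (f : EuclideanSpace ℝ (Fin d) → EuclideanSpace ℝ (Fin m))
    (ρ : Measure (EuclideanSpace ℝ (Fin d))) : Matrix (Fin m) (Fin m) ℝ :=
  fun i j => ∫ x, (f x : Fin m → ℝ) i * (f x : Fin m → ℝ) j ∂ρ

/-- Couplings of two measures: measures on the product with the given marginals. -/
def couplings {E : Type*} [MeasurableSpace E] (μ ν : Measure E) : Set (Measure (E × E)) :=
  {γ | γ.map Prod.fst = μ ∧ γ.map Prod.snd = ν}

/-- The p-Wasserstein distance (p = 1, 2 used below). -/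
noncomputable def Wp {E : Type*} [MeasurableSpace E] [NormedAddCommGroup E]
    (p : ℝ) (μ ν : Measure E) : ℝ :=
  sInf {r : ℝ | ∃ γ ∈ couplings μ ν, r = (∫ q, ‖q.1 - q.2‖ ^ p ∂γ) ^ (1 / p)}

/-! ### Auxiliary lemmas -/

lemma dot_eq_inner {m : ℕ} (x y : EuclideanSpace ℝ (Fin m)) :
    (x : Fin m → ℝ) ⬝ᵥ (y : Fin m → ℝ) = (inner ℝ x y : ℝ) := by
  simp [dotProduct, PiLp.inner_apply, RCLike.inner_apply, mul_comm]

lemma abs_dot_le {m : ℕ} (x y : EuclideanSpace ℝ (Fin m)) :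
    |(x : Fin m → ℝ) ⬝ᵥ (y : Fin m → ℝ)| ≤ ‖x‖ * ‖y‖ := by
  rw [dot_eq_inner]; exact abs_real_inner_le_norm x y

lemma coord_le_norm {m : ℕ} (a : EuclideanSpace ℝ (Fin m)) (i : Fin m) :
    |(a : Fin m → ℝ) i| ≤ ‖a‖ := by
  have h := abs_dot_le a (EuclideanSpace.single i (1:ℝ))
  rw [EuclideanSpace.norm_single] at h
  have h2 : (a : Fin m → ℝ) ⬝ᵥ ((EuclideanSpace.single i (1:ℝ)) : Fin m → ℝ)
      = (a : Fin m → ℝ) i := by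
    simp [dotProduct, EuclideanSpace.single_apply]
  rw [h2] at h
  simpa using h

lemma meas_coord {d m : ℕ} {f : EuclideanSpace ℝ (Fin d) → EuclideanSpace ℝ (Fin m)}
    (hf : Measurable f) (i : Fin m) :
    Measurable fun x => (f x : Fin m → ℝ) i :=
  (measurable_pi_apply i).comp ((WithLp.measurable_ofLp 2 _).comp hf)

lemma integrable_of_bdd {α X : Type*} [MeasurableSpace α] [NormedAddCommGroup X]
    {μ : Measure α} [IsFiniteMeasure μ] {g : α → X}
    (hg : AEStronglyMeasurable g μ) {S : Set α} (hS : ∀ᵐ a ∂μ, a ∈ S) {C : ℝ}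
    (hb : ∀ a ∈ S, ‖g a‖ ≤ C) : Integrable g μ :=
  Integrable.mono' (integrable_const C) hg (hS.mono fun a ha => hb a ha)

lemma mulVec_norm_le {m : ℕ} (A : Matrix (Fin m) (Fin m) ℝ) :
    ∃ C : ℝ, 0 ≤ C ∧ ∀ v : EuclideanSpace ℝ (Fin m),
      ‖(show EuclideanSpace ℝ (Fin m) from WithLp.toLp 2 (A *ᵥ (v : Fin m → ℝ)))‖ ≤ C * ‖v‖ := by
  open scoped Matrix.Norms.L2Operator in
  exact ⟨‖A‖, norm_nonneg A, fun v => A.l2_opNorm_mulVec v⟩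

lemma opNorm_nonneg' {m : ℕ} (A : Matrix (Fin m) (Fin m) ℝ) : 0 ≤ opNorm A :=
  Real.iSup_nonneg fun _ => norm_nonneg _

lemma norm_mulVec_le_opNorm {m : ℕ} (A : Matrix (Fin m) (Fin m) ℝ)
    (v : {v : EuclideanSpace ℝ (Fin m) // ‖v‖ = 1}) :
    ‖(show EuclideanSpace ℝ (Fin m) from WithLp.toLp 2 (A *ᵥ ((v : EuclideanSpace ℝ (Fin m)) : Fin m → ℝ)))‖
      ≤ opNorm A := by
  obtain ⟨C, hC0, hC⟩ := mulVec_norm_le A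
  refine le_ciSup (f := fun w : {v : EuclideanSpace ℝ (Fin m) // ‖v‖ = 1} =>
    ‖(show EuclideanSpace ℝ (Fin m) from WithLp.toLp 2 (A *ᵥ ((w : EuclideanSpace ℝ (Fin m)) : Fin m → ℝ)))‖)
    ⟨C, Set.forall_mem_range.2 fun w => ?_⟩ v
  simpa [w.2] using hC w

lemma quad_le {m : ℕ} (A : Matrix (Fin m) (Fin m) ℝ)
    (v : {v : EuclideanSpace ℝ (Fin m) // ‖v‖ = 1}) :
    |((v : EuclideanSpace ℝ (Fin m)) : Fin m → ℝ) ⬝ᵥ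
        A *ᵥ ((v : EuclideanSpace ℝ (Fin m)) : Fin m → ℝ)| ≤ opNorm A := by
  calc |((v : EuclideanSpace ℝ (Fin m)) : Fin m → ℝ) ⬝ᵥ A *ᵥ _|
      ≤ ‖(v : EuclideanSpace ℝ (Fin m))‖ *
        ‖(show EuclideanSpace ℝ (Fin m) from
          WithLp.toLp 2 (A *ᵥ ((v : EuclideanSpace ℝ (Fin m)) : Fin m → ℝ)))‖ :=
        abs_dot_le (v : EuclideanSpace ℝ (Fin m))
          (WithLp.toLp 2 (A *ᵥ ((v : EuclideanSpace ℝ (Fin m)) : Fin m → ℝ)))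
    _ ≤ opNorm A := by rw [v.2, one_mul]; exact norm_mulVec_le_opNorm A v

lemma abs_lamMin_sub_le {m : ℕ} (A B : Matrix (Fin m) (Fin m) ℝ) :
    |lamMin A - lamMin B| ≤ opNorm (A - B) := by
  by_cases hm : Nonempty {v : EuclideanSpace ℝ (Fin m) // ‖v‖ = 1}
  · set qA := fun v : {v : EuclideanSpace ℝ (Fin m) // ‖v‖ = 1} =>
      ((v : EuclideanSpace ℝ (Fin m)) : Fin m → ℝ) ⬝ᵥ
        A *ᵥ ((v : EuclideanSpace ℝ (Fin m)) : Fin m → ℝ) with hqA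
    set qB := fun v : {v : EuclideanSpace ℝ (Fin m) // ‖v‖ = 1} =>
      ((v : EuclideanSpace ℝ (Fin m)) : Fin m → ℝ) ⬝ᵥ
        B *ᵥ ((v : EuclideanSpace ℝ (Fin m)) : Fin m → ℝ) with hqB
    have hdiff : ∀ v, |qA v - qB v| ≤ opNorm (A - B) := by
      intro v
      have := quad_le (A - B) v
      rwa [Matrix.sub_mulVec, dotProduct_sub] at this
    have hbA : BddBelow (Set.range qA) :=
      ⟨-(opNorm A), Set.forall_mem_range.2 fun v => neg_le_of_abs_le (quad_le A v)⟩
    have hbB : BddBelow (Set.range qB) :=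
      ⟨-(opNorm B), Set.forall_mem_range.2 fun v => neg_le_of_abs_le (quad_le B v)⟩
    have h1 : lamMin A - opNorm (A - B) ≤ lamMin B := by
      refine le_ciInf fun v => ?_
      have h2 : lamMin A ≤ qA v := ciInf_le hbA v
      have h3 := (abs_sub_le_iff.1 (hdiff v)).1
      show lamMin A - opNorm (A - B) ≤ qB v
      linarith
    have h2 : lamMin B - opNorm (A - B) ≤ lamMin A := by
      refine le_ciInf fun v => ?_
      have h2 : lamMin B ≤ qB v := ciInf_le hbB v
      have h3 := (abs_sub_le_iff.1 (hdiff v)).2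
      show lamMin B - opNorm (A - B) ≤ qA v
      linarith
    rw [abs_sub_le_iff]; constructor <;> linarith
  · have he : IsEmpty {v : EuclideanSpace ℝ (Fin m) // ‖v‖ = 1} := not_nonempty_iff.1 hm
    rw [show lamMin A = 0 from Real.iInf_of_isEmpty _,
      show lamMin B = 0 from Real.iInf_of_isEmpty _]
    simpa using opNorm_nonneg' (A - B)

lemma pt_sum {m : ℕ} (a b w : EuclideanSpace ℝ (Fin m)) (i : Fin m) :
    ∑ j, ((a : Fin m → ℝ) i * (a : Fin m → ℝ) j - (b : Fin m → ℝ) i * (b : Fin m → ℝ) j)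
        * (w : Fin m → ℝ) j
      = (((inner ℝ a w : ℝ) • a - (inner ℝ b w : ℝ) • b : EuclideanSpace ℝ (Fin m)) : Fin m → ℝ) i := by
  simp only [PiLp.inner_apply, RCLike.inner_apply, starRingEnd_apply, star_trivial,
    PiLp.sub_apply, PiLp.smul_apply, smul_eq_mul,
    sub_mul, Finset.sum_sub_distrib, Finset.sum_mul]
  congr 1 <;> exact Finset.sum_congr rfl fun j _ => by ring

lemma coupling_facts {E : Type*} [MeasurableSpace E] {Ω : Set E} (hΩm : MeasurableSet Ω)
    {ρ₁ ρ₂ : Measure E} [IsProbabilityMeasure ρ₁] [IsProbabilityMeasure ρ₂]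
    (hs₁ : ρ₁ Ωᶜ = 0) (hs₂ : ρ₂ Ωᶜ = 0) {γ : Measure (E × E)} (hγ : γ ∈ couplings ρ₁ ρ₂) :
    (∀ᵐ q ∂γ, q.1 ∈ Ω ∧ q.2 ∈ Ω) ∧ IsProbabilityMeasure γ := by
  have h1 : γ (Prod.fst ⁻¹' Ωᶜ) = 0 := by
    rw [← Measure.map_apply measurable_fst hΩm.compl, hγ.1]; exact hs₁
  have h2 : γ (Prod.snd ⁻¹' Ωᶜ) = 0 := by
    rw [← Measure.map_apply measurable_snd hΩm.compl, hγ.2]; exact hs₂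
  constructor
  · have e1 : ∀ᵐ q ∂γ, q.1 ∈ Ω := by rw [ae_iff]; exact h1
    have e2 : ∀ᵐ q ∂γ, q.2 ∈ Ω := by rw [ae_iff]; exact h2
    exact e1.and e2
  · refine ⟨?_⟩
    rw [← measure_univ (μ := ρ₁), ← hγ.1,
      Measure.map_apply measurable_fst MeasurableSet.univ, Set.preimage_univ]

section main

variable {d m : ℕ}
local notation "E" => EuclideanSpace ℝ (Fin d)
local notation "F" => EuclideanSpace ℝ (Fin m)

lemma coupling_opnorm_bound
    (f : E → F) (hf : Measurable f)
    (Ω : Set E) (K L CΩ : ℝ) (hK0 : 0 ≤ K)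
    (hK : ∀ x ∈ Ω, ‖f x‖ ≤ K) (hL : ∀ x ∈ Ω, ∀ y ∈ Ω, ‖f x - f y‖ ≤ L * ‖x - y‖)
    (hCΩ : ∀ x ∈ Ω, ∀ y ∈ Ω, ‖x - y‖ ≤ CΩ)
    (ρ₁ ρ₂ : Measure E) (γ : Measure (E × E)) (hγ : γ ∈ couplings ρ₁ ρ₂)
    [IsProbabilityMeasure γ] (haeγ : ∀ᵐ q ∂γ, q.1 ∈ Ω ∧ q.2 ∈ Ω)
    (v : F) (hv : ‖v‖ = 1) :
    ‖(show F from WithLp.toLp 2 ((infoMatrix f ρ₁ - infoMatrix f ρ₂) *ᵥ (v : Fin m → ℝ)))‖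
      ≤ 2 * K * L * ∫ q, ‖q.1 - q.2‖ ∂γ := by
  classical
  have haeS : ∀ᵐ q ∂γ, q ∈ {q : E × E | q.1 ∈ Ω ∧ q.2 ∈ Ω} := haeγ
  obtain ⟨H, hHdef⟩ : ∃ H : E × E → F, H = fun q =>
      (inner ℝ (f q.1) v : ℝ) • f q.1 - (inner ℝ (f q.2) v : ℝ) • f q.2 := ⟨_, rfl⟩
  have hHq : ∀ q, H q = (inner ℝ (f q.1) v : ℝ) • f q.1 - (inner ℝ (f q.2) v : ℝ) • f q.2 :=
    fun q => by rw [hHdef]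
  have hHmeas : Measurable H := by
    rw [hHdef]
    have h1 : Measurable fun q : E × E => f q.1 := hf.comp measurable_fst
    have h2 : Measurable fun q : E × E => f q.2 := hf.comp measurable_snd
    exact ((h1.inner (𝕜 := ℝ) measurable_const).smul h1).sub ((h2.inner (𝕜 := ℝ) measurable_const).smul h2)
  have hHnorm : ∀ q ∈ {q : E × E | q.1 ∈ Ω ∧ q.2 ∈ Ω}, ‖H q‖ ≤ 2 * K * L * ‖q.1 - q.2‖ := by
    rintro q ⟨h1, h2⟩
    have hsplit : H q = (inner ℝ (f q.1 - f q.2) v : ℝ) • f q.1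
        + (inner ℝ (f q.2) v : ℝ) • (f q.1 - f q.2) := by
      rw [hHq, inner_sub_left]; module
    have e1 : |(inner ℝ (f q.1 - f q.2) v : ℝ)| ≤ ‖f q.1 - f q.2‖ := by
      simpa [hv] using abs_real_inner_le_norm (f q.1 - f q.2) v
    have e2 : |(inner ℝ (f q.2) v : ℝ)| ≤ ‖f q.2‖ := by
      simpa [hv] using abs_real_inner_le_norm (f q.2) v
    have hab : ‖f q.1 - f q.2‖ ≤ L * ‖q.1 - q.2‖ := hL _ h1 _ h2
    have ha : ‖f q.1‖ ≤ K := hK _ h1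
    have hb : ‖f q.2‖ ≤ K := hK _ h2
    calc ‖H q‖ ≤ ‖(inner ℝ (f q.1 - f q.2) v : ℝ) • f q.1‖
        + ‖(inner ℝ (f q.2) v : ℝ) • (f q.1 - f q.2)‖ := by rw [hsplit]; exact norm_add_le _ _
      _ = |(inner ℝ (f q.1 - f q.2) v : ℝ)| * ‖f q.1‖
          + |(inner ℝ (f q.2) v : ℝ)| * ‖f q.1 - f q.2‖ := by
          rw [norm_smul, norm_smul, Real.norm_eq_abs, Real.norm_eq_abs]
      _ ≤ 2 * K * L * ‖q.1 - q.2‖ := by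
          nlinarith [norm_nonneg (f q.1 - f q.2), norm_nonneg (f q.2), norm_nonneg (f q.1),
            abs_nonneg (inner ℝ (f q.1 - f q.2) v : ℝ), abs_nonneg (inner ℝ (f q.2) v : ℝ)]
  have hHint : Integrable H γ :=
    integrable_of_bdd hHmeas.aestronglyMeasurable haeS (C := K * K + K * K)
      (fun q hq => by
        have h1 := hK _ hq.1; have h2 := hK _ hq.2
        have e1 : |(inner ℝ (f q.1) v : ℝ)| ≤ ‖f q.1‖ := by
          simpa [hv] using abs_real_inner_le_norm (f q.1) v
        have e2 : |(inner ℝ (f q.2) v : ℝ)| ≤ ‖f q.2‖ := by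
          simpa [hv] using abs_real_inner_le_norm (f q.2) v
        calc ‖H q‖ ≤ ‖(inner ℝ (f q.1) v : ℝ) • f q.1‖
            + ‖(inner ℝ (f q.2) v : ℝ) • f q.2‖ := by rw [hHq]; exact norm_sub_le _ _
          _ = |(inner ℝ (f q.1) v : ℝ)| * ‖f q.1‖ + |(inner ℝ (f q.2) v : ℝ)| * ‖f q.2‖ := by
            rw [norm_smul, norm_smul, Real.norm_eq_abs, Real.norm_eq_abs]
          _ ≤ K * K + K * K := by
            nlinarith [norm_nonneg (f q.1), norm_nonneg (f q.2)])
  have hcost : Integrable (fun q : E × E => ‖q.1 - q.2‖) γ :=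
    integrable_of_bdd ((continuous_fst.sub continuous_snd).norm).measurable.aestronglyMeasurable
      haeS (C := CΩ) (fun q hq => by
        simpa using hCΩ _ hq.1 _ hq.2)
  have hcoord : ∀ i, ((infoMatrix f ρ₁ - infoMatrix f ρ₂) *ᵥ (v : Fin m → ℝ)) i
      = ∫ q, (H q : Fin m → ℝ) i ∂γ := by
    intro i
    have hmap : ∀ (μ : Measure E) (φ : E × E → E), Measurable φ → γ.map φ = μ →
        ∀ (g : E → ℝ), Measurable g → ∫ x, g x ∂μ = ∫ q, g (φ q) ∂γ := by
      intro μ φ hφ hμ g hg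
      rw [← hμ, integral_map hφ.aemeasurable hg.aestronglyMeasurable]
    have int1 : ∀ j, Integrable
        (fun q : E × E => (f q.1 : Fin m → ℝ) i * (f q.1 : Fin m → ℝ) j) γ :=
      fun j => integrable_of_bdd (((meas_coord hf i).comp measurable_fst).mul
          ((meas_coord hf j).comp measurable_fst)).aestronglyMeasurable haeS (C := K * K)
        (fun q hq => by
          have c1 : |(f q.1 : Fin m → ℝ) i| ≤ ‖f q.1‖ := coord_le_norm (f q.1) i
          have c2 : |(f q.1 : Fin m → ℝ) j| ≤ ‖f q.1‖ := coord_le_norm (f q.1) j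
          have := hK _ hq.1
          have := norm_nonneg (f q.1)
          rw [Real.norm_eq_abs, abs_mul]
          nlinarith [abs_nonneg ((f q.1 : Fin m → ℝ) i), abs_nonneg ((f q.1 : Fin m → ℝ) j)])
    have int2 : ∀ j, Integrable
        (fun q : E × E => (f q.2 : Fin m → ℝ) i * (f q.2 : Fin m → ℝ) j) γ :=
      fun j => integrable_of_bdd (((meas_coord hf i).comp measurable_snd).mul
          ((meas_coord hf j).comp measurable_snd)).aestronglyMeasurable haeS (C := K * K)
        (fun q hq => by
          have c1 : |(f q.2 : Fin m → ℝ) i| ≤ ‖f q.2‖ := coord_le_norm (f q.2) i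
          have c2 : |(f q.2 : Fin m → ℝ) j| ≤ ‖f q.2‖ := coord_le_norm (f q.2) j
          have := hK _ hq.2
          have := norm_nonneg (f q.2)
          rw [Real.norm_eq_abs, abs_mul]
          nlinarith [abs_nonneg ((f q.2 : Fin m → ℝ) i), abs_nonneg ((f q.2 : Fin m → ℝ) j)])
    have hterm : ∀ j, (infoMatrix f ρ₁ - infoMatrix f ρ₂) i j * (v : Fin m → ℝ) j
        = ∫ q, ((f q.1 : Fin m → ℝ) i * (f q.1 : Fin m → ℝ) j
            - (f q.2 : Fin m → ℝ) i * (f q.2 : Fin m → ℝ) j) * (v : Fin m → ℝ) j ∂γ := by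
      intro j
      have e1 : (infoMatrix f ρ₁) i j
          = ∫ q, (f q.1 : Fin m → ℝ) i * (f q.1 : Fin m → ℝ) j ∂γ :=
        hmap ρ₁ Prod.fst measurable_fst hγ.1 _ ((meas_coord hf i).mul (meas_coord hf j))
      have e2 : (infoMatrix f ρ₂) i j
          = ∫ q, (f q.2 : Fin m → ℝ) i * (f q.2 : Fin m → ℝ) j ∂γ :=
        hmap ρ₂ Prod.snd measurable_snd hγ.2 _ ((meas_coord hf i).mul (meas_coord hf j))
      rw [Matrix.sub_apply, e1, e2, ← integral_sub (int1 j) (int2 j), ← integral_mul_const]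
    calc ((infoMatrix f ρ₁ - infoMatrix f ρ₂) *ᵥ (v : Fin m → ℝ)) i
        = ∑ j, (infoMatrix f ρ₁ - infoMatrix f ρ₂) i j * (v : Fin m → ℝ) j := by
          simp [Matrix.mulVec, dotProduct]
      _ = ∑ j, ∫ q, ((f q.1 : Fin m → ℝ) i * (f q.1 : Fin m → ℝ) j
            - (f q.2 : Fin m → ℝ) i * (f q.2 : Fin m → ℝ) j) * (v : Fin m → ℝ) j ∂γ :=
          Finset.sum_congr rfl fun j _ => hterm j
      _ = ∫ q, ∑ j, ((f q.1 : Fin m → ℝ) i * (f q.1 : Fin m → ℝ) j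
            - (f q.2 : Fin m → ℝ) i * (f q.2 : Fin m → ℝ) j) * (v : Fin m → ℝ) j ∂γ :=
          (integral_finset_sum _ (fun j _ => ((int1 j).sub (int2 j)).mul_const _)).symm
      _ = ∫ q, (H q : Fin m → ℝ) i ∂γ := by
          refine integral_congr_ae (Filter.Eventually.of_forall fun q => ?_)
          show _ = H q i
          rw [hHq]
          exact pt_sum (f q.1) (f q.2) v i
  have hIv : (show F from WithLp.toLp 2 ((infoMatrix f ρ₁ - infoMatrix f ρ₂) *ᵥ (v : Fin m → ℝ)))
      = ∫ q, H q ∂γ := by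
    apply (WithLp.equiv 2 (Fin m → ℝ)).injective
    funext i
    have hproj := (EuclideanSpace.proj (𝕜 := ℝ) i).integral_comp_comm hHint
    simp only [PiLp.proj_apply] at hproj
    show ((infoMatrix f ρ₁ - infoMatrix f ρ₂) *ᵥ (v : Fin m → ℝ)) i = ((∫ q, H q ∂γ : F) : Fin m → ℝ) i
    rw [← hproj]
    exact hcoord i
  rw [hIv]
  calc ‖∫ q, H q ∂γ‖ ≤ ∫ q, ‖H q‖ ∂γ := norm_integral_le_integral_norm _
    _ ≤ ∫ q, 2 * K * L * ‖q.1 - q.2‖ ∂γ := by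
        refine integral_mono_ae hHint.norm (hcost.const_mul _) ?_
        exact haeS.mono fun q hq => hHnorm q hq
    _ = 2 * K * L * ∫ q, ‖q.1 - q.2‖ ∂γ := integral_const_mul _ _

end main

/-- for f bounded by K and L-Lipschitz on a compact set Ω containing the
supports of ρ₁, ρ₂, we have ‖M_{ρ₁} − M_{ρ₂}‖_op ≤ 2KL·W₁ ≤ 2KL·W₂, and the E-criterion
λ_min(M_ρ) is 2KL-Lipschitz with respect to W₂. -/
theorem stmt15 {d m : ℕ}
    (f : EuclideanSpace ℝ (Fin d) → EuclideanSpace ℝ (Fin m)) (hf : Measurable f)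
    (Ω : Set (EuclideanSpace ℝ (Fin d))) (hΩ : IsCompact Ω)
    (K L : ℝ) (hK : ∀ x ∈ Ω, ‖f x‖ ≤ K) (hL : ∀ x ∈ Ω, ∀ y ∈ Ω, ‖f x - f y‖ ≤ L * ‖x - y‖)
    (ρ₁ ρ₂ : Measure (EuclideanSpace ℝ (Fin d)))
    [IsProbabilityMeasure ρ₁] [IsProbabilityMeasure ρ₂]
    (hs₁ : ρ₁ Ωᶜ = 0) (hs₂ : ρ₂ Ωᶜ = 0) :
    opNorm (infoMatrix f ρ₁ - infoMatrix f ρ₂) ≤ 2 * K * L * Wp 1 ρ₁ ρ₂ ∧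
    Wp 1 ρ₁ ρ₂ ≤ Wp 2 ρ₁ ρ₂ ∧
    |lamMin (infoMatrix f ρ₁) - lamMin (infoMatrix f ρ₂)| ≤ 2 * K * L * Wp 2 ρ₁ ρ₂ := by
  classical
  have hΩm : MeasurableSet Ω := hΩ.isClosed.measurableSet
  have hΩne : Ω.Nonempty := by
    by_contra h
    rw [Set.not_nonempty_iff_eq_empty] at h
    rw [h, Set.compl_empty] at hs₁
    have : (1 : ENNReal) = 0 := by rw [← measure_univ (μ := ρ₁), hs₁]
    exact one_ne_zero this
  obtain ⟨x₀, hx₀⟩ := hΩne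
  have hK0 : 0 ≤ K := le_trans (norm_nonneg _) (hK x₀ hx₀)
  obtain ⟨CΩ, hCΩd⟩ := Metric.isBounded_iff.1 hΩ.isBounded
  have hCΩ : ∀ x ∈ Ω, ∀ y ∈ Ω, ‖x - y‖ ≤ CΩ := fun x hx y hy => by
    rw [← dist_eq_norm]; exact hCΩd hx hy
  -- the candidate sets
  have hprod : ρ₁.prod ρ₂ ∈ couplings ρ₁ ρ₂ := by
    constructor
    · rw [Measure.map_fst_prod]; simp
    · rw [Measure.map_snd_prod]; simp
  have hSne : ∀ p : ℝ, ∃ r, r ∈ {r : ℝ | ∃ γ ∈ couplings ρ₁ ρ₂,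
      r = (∫ q, ‖q.1 - q.2‖ ^ p ∂γ) ^ (1 / p)} :=
    fun p => ⟨_, ρ₁.prod ρ₂, hprod, rfl⟩
  have hS0 : ∀ p : ℝ, ∀ r ∈ {r : ℝ | ∃ γ ∈ couplings ρ₁ ρ₂,
      r = (∫ q, ‖q.1 - q.2‖ ^ p ∂γ) ^ (1 / p)}, 0 ≤ r := by
    rintro p r ⟨γ, hγ, rfl⟩
    exact Real.rpow_nonneg
      (integral_nonneg fun q => Real.rpow_nonneg (norm_nonneg _) _) _
  have hWnn : ∀ p : ℝ, 0 ≤ Wp p ρ₁ ρ₂ := fun p => Real.sInf_nonneg (hS0 p)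
  by_cases hsub : ∀ x ∈ Ω, ∀ y ∈ Ω, x = y
  -- degenerate case: Ω is a subsingleton
  · have hWzero : ∀ p : ℝ, 0 < p → Wp p ρ₁ ρ₂ = 0 := by
      intro p hp
      refine le_antisymm ?_ (hWnn p)
      have hae := (coupling_facts hΩm hs₁ hs₂ hprod).1
      have hcost0 : (∫ q, ‖q.1 - q.2‖ ^ p ∂(ρ₁.prod ρ₂)) = 0 := by
        rw [show (0:ℝ) = ∫ (_ : EuclideanSpace ℝ (Fin d) × EuclideanSpace ℝ (Fin d)),
            (0:ℝ) ∂(ρ₁.prod ρ₂) by simp]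
        refine integral_congr_ae (hae.mono fun q hq => ?_)
        show ‖q.1 - q.2‖ ^ p = 0
        rw [hsub _ hq.1 _ hq.2, sub_self, norm_zero, Real.zero_rpow (ne_of_gt hp)]
      have hmem : (0:ℝ) ∈ {r : ℝ | ∃ γ ∈ couplings ρ₁ ρ₂,
          r = (∫ q, ‖q.1 - q.2‖ ^ p ∂γ) ^ (1 / p)} := by
        refine ⟨ρ₁.prod ρ₂, hprod, ?_⟩
        rw [hcost0, Real.zero_rpow (by positivity)]
      exact csInf_le ⟨0, hS0 p⟩ hmem
    have hM : infoMatrix f ρ₁ = infoMatrix f ρ₂ := by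
      have hae₁ : ∀ᵐ x ∂ρ₁, x ∈ Ω := by rw [ae_iff]; exact hs₁
      have hae₂ : ∀ᵐ x ∂ρ₂, x ∈ Ω := by rw [ae_iff]; exact hs₂
      ext i j
      have e1 : (infoMatrix f ρ₁) i j = (f x₀ : Fin m → ℝ) i * (f x₀ : Fin m → ℝ) j := by
        show (∫ x, (f x : Fin m → ℝ) i * (f x : Fin m → ℝ) j ∂ρ₁) = _
        rw [integral_congr_ae (g := fun _ => (f x₀ : Fin m → ℝ) i * (f x₀ : Fin m → ℝ) j)
          (hae₁.mono fun x hx => by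
            show (f x : Fin m → ℝ) i * (f x : Fin m → ℝ) j = _
            rw [hsub x hx x₀ hx₀])]
        simp
      have e2 : (infoMatrix f ρ₂) i j = (f x₀ : Fin m → ℝ) i * (f x₀ : Fin m → ℝ) j := by
        show (∫ x, (f x : Fin m → ℝ) i * (f x : Fin m → ℝ) j ∂ρ₂) = _
        rw [integral_congr_ae (g := fun _ => (f x₀ : Fin m → ℝ) i * (f x₀ : Fin m → ℝ) j)
          (hae₂.mono fun x hx => by
            show (f x : Fin m → ℝ) i * (f x : Fin m → ℝ) j = _
            rw [hsub x hx x₀ hx₀])]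
        simp
      rw [e1, e2]
    rw [hM, hWzero 1 one_pos, hWzero 2 two_pos]
    refine ⟨?_, le_rfl, ?_⟩
    · rw [sub_self, mul_zero]
      refine Real.iSup_le (fun v => le_of_eq ?_) le_rfl
      rw [Matrix.zero_mulVec]
      exact norm_zero
    · rw [sub_self, abs_zero, mul_zero]
  -- main case: Ω has two distinct points, so L ≥ 0
  · push_neg at hsub
    obtain ⟨x, hx, y, hy, hxy⟩ := hsub
    have hL0 : 0 ≤ L := by
      have h1 := hL x hx y hy
      have h2 : (0:ℝ) < ‖x - y‖ := by
        rw [norm_pos_iff]; exact sub_ne_zero_of_ne hxy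
      nlinarith [norm_nonneg (f x - f y)]
    have hKL0 : 0 ≤ 2 * K * L := by positivity
    -- Part 1
    have hop : opNorm (infoMatrix f ρ₁ - infoMatrix f ρ₂) ≤ 2 * K * L * Wp 1 ρ₁ ρ₂ := by
      have h1 : ∀ r ∈ {r : ℝ | ∃ γ ∈ couplings ρ₁ ρ₂,
          r = (∫ q, ‖q.1 - q.2‖ ^ (1:ℝ) ∂γ) ^ (1 / (1:ℝ))},
          opNorm (infoMatrix f ρ₁ - infoMatrix f ρ₂) ≤ 2 * K * L * r := by
        rintro r ⟨γ, hγc, rfl⟩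
        obtain ⟨haeγ, hγprob⟩ := coupling_facts hΩm hs₁ hs₂ hγc
        haveI := hγprob
        have hr : (∫ q, ‖q.1 - q.2‖ ^ (1:ℝ) ∂γ) ^ (1 / (1:ℝ))
            = ∫ q, ‖q.1 - q.2‖ ∂γ := by
          norm_num
        rw [hr]
        refine Real.iSup_le (fun v => ?_) ?_
        · exact coupling_opnorm_bound f hf Ω K L CΩ hK0 hK hL hCΩ ρ₁ ρ₂ γ hγc haeγ v.1 v.2
        · exact mul_nonneg hKL0 (integral_nonneg fun q => norm_nonneg _)
      by_cases h0 : 2 * K * L = 0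
      · obtain ⟨r, hr⟩ := hSne 1
        have := h1 r hr
        rw [h0, zero_mul] at this ⊢
        exact this
      · have hpos : 0 < 2 * K * L := lt_of_le_of_ne hKL0 (Ne.symm h0)
        have : opNorm (infoMatrix f ρ₁ - infoMatrix f ρ₂) / (2 * K * L)
            ≤ Wp 1 ρ₁ ρ₂ := by
          refine le_csInf (hSne 1) fun r hr => ?_
          rw [div_le_iff₀ hpos]
          exact (h1 r hr).trans_eq (mul_comm _ _)
        calc opNorm (infoMatrix f ρ₁ - infoMatrix f ρ₂)
            = opNorm (infoMatrix f ρ₁ - infoMatrix f ρ₂) / (2 * K * L) * (2 * K * L) := by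
              rw [div_mul_cancel₀ _ h0]
          _ ≤ Wp 1 ρ₁ ρ₂ * (2 * K * L) := mul_le_mul_of_nonneg_right this hKL0
          _ = 2 * K * L * Wp 1 ρ₁ ρ₂ := mul_comm _ _
    -- Part 2
    have hW12 : Wp 1 ρ₁ ρ₂ ≤ Wp 2 ρ₁ ρ₂ := by
      refine le_csInf (hSne 2) ?_
      rintro r ⟨γ, hγc, rfl⟩
      obtain ⟨haeγ, hγprob⟩ := coupling_facts hΩm hs₁ hs₂ hγc
      haveI := hγprob
      have hcost : Integrable (fun q : EuclideanSpace ℝ (Fin d) × EuclideanSpace ℝ (Fin d)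
          => ‖q.1 - q.2‖) γ :=
        integrable_of_bdd
          ((continuous_fst.sub continuous_snd).norm).measurable.aestronglyMeasurable
          haeγ (C := CΩ) (fun q hq => by simpa using hCΩ _ hq.1 _ hq.2)
      have hmem : MemLp (fun q : EuclideanSpace ℝ (Fin d) × EuclideanSpace ℝ (Fin d)
          => ‖q.1 - q.2‖) 2 γ :=
        MemLp.of_bound
          ((continuous_fst.sub continuous_snd).norm).measurable.aestronglyMeasurable
          (max CΩ 0) (haeγ.mono fun q hq => by
            simp only [Real.norm_eq_abs, abs_norm]
            exact le_max_of_le_left (hCΩ _ hq.1 _ hq.2))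
      have hvar := ProbabilityTheory.variance_nonneg
        (fun q : EuclideanSpace ℝ (Fin d) × EuclideanSpace ℝ (Fin d) => ‖q.1 - q.2‖) γ
      rw [ProbabilityTheory.variance_eq_sub hmem] at hvar
      have hsq : (∫ q, ‖q.1 - q.2‖ ∂γ) ^ 2
          ≤ ∫ q : EuclideanSpace ℝ (Fin d) × EuclideanSpace ℝ (Fin d),
              ‖q.1 - q.2‖ ^ 2 ∂γ := by
        have : ∫ q : EuclideanSpace ℝ (Fin d) × EuclideanSpace ℝ (Fin d),
            ((fun q : EuclideanSpace ℝ (Fin d) × EuclideanSpace ℝ (Fin d)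
              => ‖q.1 - q.2‖) ^ 2) q ∂γ
            = ∫ q : EuclideanSpace ℝ (Fin d) × EuclideanSpace ℝ (Fin d),
              ‖q.1 - q.2‖ ^ 2 ∂γ := by
          refine integral_congr_ae (Filter.Eventually.of_forall fun q => ?_)
          simp [Pi.pow_apply]
        rw [this] at hvar
        linarith
      have hrw2 : (∫ q, ‖q.1 - q.2‖ ^ (2:ℝ) ∂γ)
          = ∫ q : EuclideanSpace ℝ (Fin d) × EuclideanSpace ℝ (Fin d),
              ‖q.1 - q.2‖ ^ 2 ∂γ := by
        refine integral_congr_ae (Filter.Eventually.of_forall fun q => ?_)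
        show ‖q.1 - q.2‖ ^ (2:ℝ) = ‖q.1 - q.2‖ ^ (2:ℕ)
        rw [show ((2:ℝ)) = ((2:ℕ):ℝ) by norm_num, Real.rpow_natCast]
      have hW1r : Wp 1 ρ₁ ρ₂ ≤ ∫ q, ‖q.1 - q.2‖ ∂γ := by
        have hmem1 : (∫ q, ‖q.1 - q.2‖ ∂γ) ∈ {r : ℝ | ∃ γ ∈ couplings ρ₁ ρ₂,
            r = (∫ q, ‖q.1 - q.2‖ ^ (1:ℝ) ∂γ) ^ (1 / (1:ℝ))} := by
          refine ⟨γ, hγc, ?_⟩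
          norm_num
        exact csInf_le ⟨0, hS0 1⟩ hmem1
      refine hW1r.trans ?_
      have hnn : 0 ≤ ∫ q, ‖q.1 - q.2‖ ∂γ := integral_nonneg fun q => norm_nonneg _
      have hnn2 : 0 ≤ ∫ q : EuclideanSpace ℝ (Fin d) × EuclideanSpace ℝ (Fin d),
          ‖q.1 - q.2‖ ^ 2 ∂γ := le_trans (sq_nonneg _) hsq
      calc (∫ q, ‖q.1 - q.2‖ ∂γ)
          ≤ Real.sqrt (∫ q : EuclideanSpace ℝ (Fin d) × EuclideanSpace ℝ (Fin d),
              ‖q.1 - q.2‖ ^ 2 ∂γ) := (Real.le_sqrt hnn hnn2).2 hsq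
        _ = (∫ q, ‖q.1 - q.2‖ ^ (2:ℝ) ∂γ) ^ (1 / (2:ℝ)) := by
            rw [hrw2, Real.sqrt_eq_rpow]
    refine ⟨hop, hW12, ?_⟩
    calc |lamMin (infoMatrix f ρ₁) - lamMin (infoMatrix f ρ₂)|
        ≤ opNorm (infoMatrix f ρ₁ - infoMatrix f ρ₂) := abs_lamMin_sub_le _ _
      _ ≤ 2 * K * L * Wp 1 ρ₁ ρ₂ := hop
      _ ≤ 2 * K * L * Wp 2 ρ₁ ρ₂ := mul_le_mul_of_nonneg_left hW12 hKL0
end
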